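/- Let n ≥ 1 and let u, v ∈ ℂ^{2n}, with coordinates indexed so that the hyperbolic bilinear form is B(x,y) = ∑_{i=1}^{n} (x_i y_{n+i} + x_{n+i} y_i). Assume B(u,u) = B(v,v) = B(u,v) = 0 (the plane spanned by u,v is isotropic). Write p(a,b) = u_a v_b − u_b v_a for the Plücker coordinates, and set I_0 = ∑_{i=1}^n p(i, n+i)^2, I_1 = ∑_{i<j} p(i,n+i) p(j,n+j), I_2 = ∑_{i<j} p(i,j) p(n+i,n+j), I_3 = ∑_{i<j} p(i,n+j) p(j,n+i). Then I_2 = I_1/2 + I_0/4 and I_3 = I_1/2 − I_0/4. -/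

import Mathlib

/-- Plücker coordinate of the plane spanned by `u, v`. -/
def pluck {n : ℕ} (u v : Fin n ⊕ Fin n → ℂ) (a b : Fin n ⊕ Fin n) : ℂ :=
  u a * v b - u b * v a

private lemma two_mul_sum_Ioi {n : ℕ} (g : Fin n → Fin n → ℂ)
    (hsym : ∀ i j, g i j = g j i) :
    2 * ∑ i, ∑ j ∈ Finset.Ioi i, g i j = (∑ i, ∑ j, g i j) - ∑ i, g i i := by
  have h := Finset.sum_sum_Ioi_add_eq_sum_sum_off_diag g
  have h2 : ∑ i, ∑ j ∈ Finset.Ioi i, (g j i + g i j)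
      = 2 * ∑ i, ∑ j ∈ Finset.Ioi i, g i j := by
    rw [Finset.mul_sum]
    refine Finset.sum_congr rfl fun i _ => ?_
    rw [Finset.mul_sum]
    exact Finset.sum_congr rfl fun j _ => by rw [hsym j i]; ring
  rw [h2] at h
  rw [h]
  have h4 : (∑ i, ∑ j, g i j) = ∑ i : Fin n, ∑ j : Fin n, g j i :=
    Finset.sum_congr rfl fun i _ => Finset.sum_congr rfl fun j _ => hsym i j
  rw [h4, ← Finset.sum_sub_distrib]
  refine Finset.sum_congr rfl fun i _ => ?_
  have h5 := Finset.sum_compl_add_sum ({i} : Finset (Fin n)) (fun j => g j i)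
  simp only [Finset.sum_singleton] at h5
  rw [eq_sub_iff_add_eq]
  convert h5 using 3

/-- Quadratic identities on the orthogonal Grassmannian `OG(2,2n)`:
for an isotropic plane `⟨u,v⟩` (w.r.t. the hyperbolic form), the sums
`I₂ = I₁/2 + I₀/4` and `I₃ = I₁/2 − I₀/4`. -/
theorem isotropic_plane_plucker_sums (n : ℕ) (hn : 1 ≤ n)
    (u v : Fin n ⊕ Fin n → ℂ)
    (huu : (∑ i : Fin n, (u (Sum.inl i) * u (Sum.inr i)
              + u (Sum.inr i) * u (Sum.inl i))) = 0)
    (hvv : (∑ i : Fin n, (v (Sum.inl i) * v (Sum.inr i)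
              + v (Sum.inr i) * v (Sum.inl i))) = 0)
    (huv : (∑ i : Fin n, (u (Sum.inl i) * v (Sum.inr i)
              + u (Sum.inr i) * v (Sum.inl i))) = 0) :
    (∑ i : Fin n, ∑ j ∈ Finset.Ioi i,
        pluck u v (Sum.inl i) (Sum.inl j) * pluck u v (Sum.inr i) (Sum.inr j))
      = (∑ i : Fin n, ∑ j ∈ Finset.Ioi i,
          pluck u v (Sum.inl i) (Sum.inr i) * pluck u v (Sum.inl j) (Sum.inr j)) / 2
        + (∑ i : Fin n, (pluck u v (Sum.inl i) (Sum.inr i)) ^ 2) / 4 ∧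
    (∑ i : Fin n, ∑ j ∈ Finset.Ioi i,
        pluck u v (Sum.inl i) (Sum.inr j) * pluck u v (Sum.inl j) (Sum.inr i))
      = (∑ i : Fin n, ∑ j ∈ Finset.Ioi i,
          pluck u v (Sum.inl i) (Sum.inr i) * pluck u v (Sum.inl j) (Sum.inr j)) / 2
        - (∑ i : Fin n, (pluck u v (Sum.inl i) (Sum.inr i)) ^ 2) / 4 := by
  set a : Fin n → ℂ := fun i => u (Sum.inl i) with ha
  set b : Fin n → ℂ := fun i => u (Sum.inr i) with hb
  set c : Fin n → ℂ := fun i => v (Sum.inl i) with hc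
  set d : Fin n → ℂ := fun i => v (Sum.inr i) with hd
  set A : ℂ := ∑ i, a i * d i with hA
  set B : ℂ := ∑ i, b i * c i with hB
  set S1 : ℂ := ∑ i, a i * b i with hS1
  set S2 : ℂ := ∑ i, c i * d i with hS2
  set I0 : ℂ := ∑ i : Fin n, (pluck u v (Sum.inl i) (Sum.inr i)) ^ 2 with hI0
  -- translate hypotheses
  have hS1' : S1 = 0 := by
    have : (2 : ℂ) * S1 = 0 := by
      rw [hS1, Finset.mul_sum, ← huu]
      exact Finset.sum_congr rfl fun i _ => by ring
    linear_combination this / 2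
  have hS2' : S2 = 0 := by
    have : (2 : ℂ) * S2 = 0 := by
      rw [hS2, Finset.mul_sum, ← hvv]
      exact Finset.sum_congr rfl fun i _ => by ring
    linear_combination this / 2
  have hAB : A + B = 0 := by
    rw [hA, hB, ← Finset.sum_add_distrib, ← huv]
  -- the three double sums
  have key2 : 2 * (∑ i : Fin n, ∑ j ∈ Finset.Ioi i,
      pluck u v (Sum.inl i) (Sum.inl j) * pluck u v (Sum.inr i) (Sum.inr j))
      = 2 * S1 * S2 - 2 * A * B := by
    rw [two_mul_sum_Ioi _ (fun i j => by simp only [pluck]; ring)]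
    have hdiag : ∑ i : Fin n,
        pluck u v (Sum.inl i) (Sum.inl i) * pluck u v (Sum.inr i) (Sum.inr i) = 0 := by
      refine Finset.sum_eq_zero fun i _ => ?_
      simp only [pluck]; ring
    rw [hdiag, sub_zero]
    have hrow : ∀ i : Fin n, ∑ j : Fin n,
        pluck u v (Sum.inl i) (Sum.inl j) * pluck u v (Sum.inr i) (Sum.inr j)
        = (a i * b i) * S2 - (a i * d i) * B - (b i * c i) * A + (c i * d i) * S1 := by
      intro i
      simp only [hS2, hB, hA, hS1, Finset.mul_sum, ← Finset.sum_sub_distrib,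
        ← Finset.sum_add_distrib]
      exact Finset.sum_congr rfl fun j _ => by simp only [pluck]; ring
    calc ∑ i : Fin n, ∑ j : Fin n,
          pluck u v (Sum.inl i) (Sum.inl j) * pluck u v (Sum.inr i) (Sum.inr j)
        = ∑ i : Fin n, ((a i * b i) * S2 - (a i * d i) * B - (b i * c i) * A
            + (c i * d i) * S1) := Finset.sum_congr rfl fun i _ => hrow i
      _ = S1 * S2 - A * B - B * A + S2 * S1 := by
          simp only [Finset.sum_add_distrib, Finset.sum_sub_distrib, ← Finset.sum_mul,
            ← hS1, ← hS2, ← hA, ← hB]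
      _ = 2 * S1 * S2 - 2 * A * B := by ring
  have key1 : 2 * (∑ i : Fin n, ∑ j ∈ Finset.Ioi i,
      pluck u v (Sum.inl i) (Sum.inr i) * pluck u v (Sum.inl j) (Sum.inr j))
      = (A - B) ^ 2 - I0 := by
    rw [two_mul_sum_Ioi _ (fun i j => by ring)]
    have hdiag : ∑ i : Fin n,
        pluck u v (Sum.inl i) (Sum.inr i) * pluck u v (Sum.inl i) (Sum.inr i) = I0 := by
      exact Finset.sum_congr rfl fun i _ => by ring
    rw [hdiag]
    congr 1
    rw [← Finset.sum_mul_sum]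
    have hT : ∑ i : Fin n, pluck u v (Sum.inl i) (Sum.inr i) = A - B := by
      rw [hA, hB, ← Finset.sum_sub_distrib]
      exact Finset.sum_congr rfl fun i _ => rfl
    rw [hT]; ring
  have key3 : 2 * (∑ i : Fin n, ∑ j ∈ Finset.Ioi i,
      pluck u v (Sum.inl i) (Sum.inr j) * pluck u v (Sum.inl j) (Sum.inr i))
      = (A ^ 2 + B ^ 2 - 2 * S1 * S2) - I0 := by
    rw [two_mul_sum_Ioi _ (fun i j => by simp only [pluck]; ring)]
    have hdiag : ∑ i : Fin n,
        pluck u v (Sum.inl i) (Sum.inr i) * pluck u v (Sum.inl i) (Sum.inr i) = I0 := by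
      exact Finset.sum_congr rfl fun i _ => by ring
    rw [hdiag]
    congr 1
    have hrow : ∀ i : Fin n, ∑ j : Fin n,
        pluck u v (Sum.inl i) (Sum.inr j) * pluck u v (Sum.inl j) (Sum.inr i)
        = (a i * d i) * A - (a i * b i) * S2 - (c i * d i) * S1 + (b i * c i) * B := by
      intro i
      simp only [hS2, hB, hA, hS1, Finset.mul_sum, ← Finset.sum_sub_distrib,
        ← Finset.sum_add_distrib]
      exact Finset.sum_congr rfl fun j _ => by simp only [pluck]; ring
    calc ∑ i : Fin n, ∑ j : Fin n,
          pluck u v (Sum.inl i) (Sum.inr j) * pluck u v (Sum.inl j) (Sum.inr i)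
        = ∑ i : Fin n, ((a i * d i) * A - (a i * b i) * S2 - (c i * d i) * S1
            + (b i * c i) * B) := Finset.sum_congr rfl fun i _ => hrow i
      _ = A * A - S1 * S2 - S2 * S1 + B * B := by
          simp only [Finset.sum_add_distrib, Finset.sum_sub_distrib, ← Finset.sum_mul,
            ← hS1, ← hS2, ← hA, ← hB]
      _ = A ^ 2 + B ^ 2 - 2 * S1 * S2 := by ring
  constructor
  · linear_combination key2 / 2 - key1 / 4 + S2 * hS1' - (A + B) / 4 * hAB
  · linear_combination key3 / 2 - key1 / 4 - S2 * hS1' + (A + B) / 4 * hAB
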